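/- Let n ≥ 1 and let σ be a permutation of {1,…,m}. Then ℓ(σ) ≥ n if and only if there exist k ≤ 2n and a permutation τ of {1,…,k} with ℓ(τ) ≥ n such that σ contains τ. -/

import Mathlib

/-- The (Coxeter) length of a permutation: its number of inversions,
i.e. pairs `i < j` with `σ i > σ j`. -/
def invCount {m : ℕ} (σ : Equiv.Perm (Fin m)) : ℕ :=
  (Finset.univ.filter (fun p : Fin m × Fin m => p.1 < p.2 ∧ σ p.2 < σ p.1)).card

/-- `σ` pattern-contains `π`: there are indices `i_1 < ⋯ < i_k` such that
`σ (i_a) < σ (i_b)` iff `π a < π b`. -/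
def PatternContains {n k : ℕ} (σ : Equiv.Perm (Fin n)) (π : Equiv.Perm (Fin k)) : Prop :=
  ∃ f : Fin k ↪o Fin n, ∀ a b : Fin k, σ (f a) < σ (f b) ↔ π a < π b

/-- Theorem 3.1: for `n ≥ 1`, a permutation `σ ∈ S_m` has `ℓ(σ) ≥ n` iff `σ`
contains some `τ ∈ S_k` with `k ≤ 2n` and `ℓ(τ) ≥ n`. -/
theorem length_ge_iff_contains_short_pattern {n m : ℕ} (hn : 1 ≤ n)
    (σ : Equiv.Perm (Fin m)) :
    n ≤ invCount σ ↔
      ∃ k ≤ 2 * n, ∃ τ : Equiv.Perm (Fin k), n ≤ invCount τ ∧ PatternContains σ τ := by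
  constructor
  · intro hσ
    obtain ⟨J, hJI, hJcard⟩ := Finset.exists_subset_card_eq hσ
    set T : Finset (Fin m) := J.image Prod.fst ∪ J.image Prod.snd with hT
    have hTcard : T.card ≤ 2 * n := by
      calc T.card ≤ (J.image Prod.fst).card + (J.image Prod.snd).card :=
            Finset.card_union_le _ _
        _ ≤ J.card + J.card := add_le_add Finset.card_image_le Finset.card_image_le
        _ = 2 * n := by omega
    set k := T.card with hk
    let e : Fin k ≃o {x // x ∈ T} := T.orderIsoOfFin rfl
    set U : Finset (Fin m) := T.image σ with hU
    have hUcard : U.card = k := by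
      rw [hU, Finset.card_image_of_injective _ σ.injective]
    let u : Fin k ≃o {y // y ∈ U} := U.orderIsoOfFin hUcard
    have hmem : ∀ x : Fin m, x ∈ T → σ x ∈ U := fun x hx => Finset.mem_image_of_mem σ hx
    let g : Fin k → Fin k := fun a => u.symm ⟨σ (e a), hmem _ (e a).2⟩
    have hginj : Function.Injective g := by
      intro a b hab
      have := u.symm.injective hab
      have h2 : σ (e a) = σ (e b) := congrArg Subtype.val this
      exact e.injective (Subtype.ext (σ.injective h2))
    let τ : Equiv.Perm (Fin k) := Equiv.ofBijective g (Finite.injective_iff_bijective.mp hginj)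
    have hτlt : ∀ a b : Fin k, τ a < τ b ↔ σ (e a) < σ (e b) := by
      intro a b
      show u.symm _ < u.symm _ ↔ _
      rw [u.symm.lt_iff_lt]
      exact Iff.rfl
    refine ⟨k, hTcard, τ, ?_, ?_⟩
    · -- n ≤ invCount τ
      rw [← hJcard, ← Finset.card_attach (s := J)]
      apply Finset.card_le_card_of_injOn
        (fun p : {p // p ∈ J} => (e.symm ⟨p.1.1,
            Finset.mem_union_left _ (Finset.mem_image_of_mem _ p.2)⟩,
          e.symm ⟨p.1.2,
            Finset.mem_union_right _ (Finset.mem_image_of_mem _ p.2)⟩))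
      · intro p _
        have hpI := hJI p.2
        simp only [Finset.mem_coe, Finset.mem_filter, Finset.mem_univ, true_and] at hpI ⊢
        constructor
        · rw [e.symm.lt_iff_lt]
          exact hpI.1
        · rw [hτlt]
          simp only [OrderIso.apply_symm_apply]
          exact hpI.2
      · intro p _ q _ hpq
        have h1 := congrArg Prod.fst hpq
        have h2 := congrArg Prod.snd hpq
        simp only at h1 h2
        have h1' : p.1.1 = q.1.1 := congrArg Subtype.val (e.symm.injective h1)
        have h2' : p.1.2 = q.1.2 := congrArg Subtype.val (e.symm.injective h2)
        exact Subtype.ext (Prod.ext h1' h2')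
    · refine ⟨(e : Fin k ↪o {x // x ∈ T}).trans
        (OrderEmbedding.subtype (· ∈ T)), ?_⟩
      intro a b
      rw [hτlt]
      exact Iff.rfl
  · rintro ⟨k, hk, τ, hτ, f, hf⟩
    refine le_trans hτ ?_
    apply Finset.card_le_card_of_injOn (fun p => (f p.1, f p.2))
    · intro p hp
      simp only [Finset.mem_coe, Finset.mem_filter, Finset.mem_univ, true_and] at hp ⊢
      refine ⟨f.lt_iff_lt.mpr hp.1, ?_⟩
      have h1 : ¬ σ (f p.1) < σ (f p.2) := fun h =>
        absurd ((hf _ _).mp h) (not_lt.mpr hp.2.le)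
      have h2 : σ (f p.2) ≠ σ (f p.1) := fun h => by
        have := f.injective (σ.injective h)
        exact absurd this (ne_of_gt hp.1)
      exact lt_of_le_of_ne (not_lt.mp h1) h2
    · intro p _ q _ hpq
      have h1 := f.injective (congrArg Prod.fst hpq)
      have h2 := f.injective (congrArg Prod.snd hpq)
      exact Prod.ext h1 h2
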